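/- There exists a unique power series Ψ ∈ T + T²ℤ[[T]] satisfying the functional equation Σ_{j=0}^∞ p^{−j} Ψ(p^j T)^{q^j} = T in ℚ[[T]]. -/

import Mathlib

open PowerSeries Filter

/-- The functional equation `∑_{j≥0} p^{-j} Ψ(p^j T)^{q^j} = T` in `ℚ[[T]]`, read
coefficientwise (for each `n`, only the finitely many terms with `q^j ≤ n` contribute,
so the sum over `j ∈ range (n+1)` is the full sum), together with the normalization
`Ψ ∈ T + T²ℤ[[T]]`. -/
def IsPsi (p q : ℕ) (Ψ : PowerSeries ℤ) : Prop :=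
  PowerSeries.constantCoeff Ψ = 0 ∧ PowerSeries.coeff 1 Ψ = 1 ∧
  ∀ n : ℕ,
    (∑ j ∈ Finset.range (n + 1),
      ((p : ℚ) ^ j)⁻¹ *
        PowerSeries.coeff n
          ((PowerSeries.rescale ((p : ℚ) ^ j) (Ψ.map (Int.castRingHom ℚ))) ^ (q ^ j)))
      = PowerSeries.coeff n (PowerSeries.X : PowerSeries ℚ)

namespace PsiAux

/-- If two series agree below `n`, so do all their powers. -/
lemma coeff_pow_congr_lt {R : Type*} [CommRing R] {φ φ' : PowerSeries R} {n : ℕ}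
    (h : ∀ k < n, coeff k φ = coeff k φ') (m : ℕ) :
    ∀ k < n, coeff k (φ ^ m) = coeff k (φ' ^ m) := by
  induction m with
  | zero => intro k _; simp
  | succ m ih =>
      intro k hk
      rw [pow_succ, pow_succ, coeff_mul, coeff_mul]
      refine Finset.sum_congr rfl fun x hx => ?_
      rw [Finset.HasAntidiagonal.mem_antidiagonal] at hx
      rw [ih x.1 (lt_of_le_of_lt (by omega) hk), h x.2 (lt_of_le_of_lt (by omega) hk)]

/-- If two series with zero constant term agree below `n`, then their `m`-th powers
(`m ≥ 2`) agree at `n` as well. -/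
lemma coeff_pow_congr {R : Type*} [CommRing R] {φ φ' : PowerSeries R} {n : ℕ}
    (h : ∀ k < n, coeff k φ = coeff k φ')
    (h0 : constantCoeff φ = 0) (h0' : constantCoeff φ' = 0)
    {m : ℕ} (hm : 2 ≤ m) : coeff n (φ ^ m) = coeff n (φ' ^ m) := by
  obtain ⟨m', rfl⟩ : ∃ m', m = m' + 1 := ⟨m - 1, by omega⟩
  have hm' : m' ≠ 0 := by omega
  rw [pow_succ, pow_succ, coeff_mul, coeff_mul]
  refine Finset.sum_congr rfl fun x hx => ?_
  rw [Finset.HasAntidiagonal.mem_antidiagonal] at hx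
  by_cases h1 : x.1 = 0
  · have e1 : coeff x.1 (φ ^ m') = 0 := by
      simp [h1, coeff_zero_eq_constantCoeff, map_pow, h0, zero_pow hm']
    have e2 : coeff x.1 (φ' ^ m') = 0 := by
      simp [h1, coeff_zero_eq_constantCoeff, map_pow, h0', zero_pow hm']
    rw [e1, e2, zero_mul, zero_mul]
  · by_cases h2 : x.2 = 0
    · have e0 : coeff x.2 φ = 0 := by rw [h2, coeff_zero_eq_constantCoeff, h0]
      have e0' : coeff x.2 φ' = 0 := by rw [h2, coeff_zero_eq_constantCoeff, h0']
      rw [e0, e0', mul_zero, mul_zero]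
    · have hx1 : x.1 < n := by omega
      have hx2 : x.2 < n := by omega
      rw [coeff_pow_congr_lt h m' x.1 hx1, h x.2 hx2]

/-- powers kill low coefficients -/
lemma coeff_pow_eq_zero {R : Type*} [CommRing R] {φ : PowerSeries R}
    (h0 : constantCoeff φ = 0) {n m : ℕ} (hn : n < m) : coeff n (φ ^ m) = 0 := by
  have hX : (X : PowerSeries R) ∣ φ := X_dvd_iff.2 h0
  have : (X : PowerSeries R) ^ m ∣ φ ^ m := pow_dvd_pow_of_dvd hX m
  exact X_pow_dvd_iff.1 this n hn

/-- The coefficients of `Ψ`, defined by strong recursion. -/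
noncomputable def c (p q : ℕ) : ℕ → ℤ
  | 0 => 0
  | 1 => 1
  | (n+2) =>
      -∑ j ∈ Finset.range (n + 2), (p : ℤ) ^ ((j + 1) * (n + 1)) *
        PowerSeries.coeff (n + 2)
          ((PowerSeries.mk fun k => if h : k < n + 2 then c p q k else 0) ^ q ^ (j + 1))
  decreasing_by exact h

/-- Truncation of the `c`-series below `n`. -/
noncomputable def tau (p q n : ℕ) : PowerSeries ℤ :=
  PowerSeries.mk fun k => if h : k < n then c p q k else 0

lemma c_spec (p q n : ℕ) :
    c p q (n + 2) =
      -∑ j ∈ Finset.range (n + 2), (p : ℤ) ^ ((j + 1) * (n + 1)) *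
        PowerSeries.coeff (n + 2) ((tau p q (n + 2)) ^ q ^ (j + 1)) := by
  rw [c, tau]

lemma tau_const (p q n : ℕ) : constantCoeff (tau p q n) = 0 := by
  rw [← coeff_zero_eq_constantCoeff, tau, coeff_mk]
  split <;> simp [c]

/-- The key term computation. -/
lemma term_eq (p : ℕ) (hp : (p : ℚ) ≠ 0) (n j m : ℕ) (hn : 1 ≤ n) (φ : PowerSeries ℤ) :
    ((p : ℚ) ^ j)⁻¹ *
        PowerSeries.coeff n
          ((PowerSeries.rescale ((p : ℚ) ^ j) (φ.map (Int.castRingHom ℚ))) ^ m)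
      = (((p : ℤ) ^ (j * (n - 1)) * PowerSeries.coeff n (φ ^ m) : ℤ) : ℚ) := by
  rw [← map_pow (rescale ((p : ℚ) ^ j)), coeff_rescale, ← map_pow (PowerSeries.map _),
    coeff_map]
  have hcast : (Int.castRingHom ℚ) (coeff n (φ ^ m)) = ((coeff n (φ ^ m) : ℤ) : ℚ) := rfl
  rw [hcast]
  push_cast
  have hpow : ((p : ℚ) ^ j) ^ n = (p : ℚ) ^ (j * (n - 1)) * (p : ℚ) ^ j := by
    rw [← pow_mul, ← pow_add]
    congr 1
    have hn1 : n - 1 + 1 = n := by omega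
    calc j * n = j * (n - 1 + 1) := by rw [hn1]
    _ = j * (n - 1) + j := by ring
  rw [hpow]
  have hpj : ((p : ℚ) ^ j) ≠ 0 := pow_ne_zero _ hp
  field_simp

end PsiAux

open PsiAux in
/-- there is a unique `Ψ ∈ T + T²ℤ[[T]]` with
`∑_{j=0}^∞ p^{-j} Ψ(p^j T)^{q^j} = T`. -/
theorem exists_unique_psi (p f : ℕ) (hp : p.Prime) (hf : 0 < f) (q : ℕ) (hq : q = p ^ f) :
    ∃! Ψ : PowerSeries ℤ, IsPsi p q Ψ := by
  have hp0 : (p : ℚ) ≠ 0 := Nat.cast_ne_zero.2 hp.ne_zero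
  have hq2 : 2 ≤ q := by
    rw [hq]
    calc 2 ≤ p := hp.two_le
    _ = p ^ 1 := (pow_one p).symm
    _ ≤ p ^ f := Nat.pow_le_pow_right hp.one_lt.le hf
  have hqj : ∀ j : ℕ, 1 ≤ j → 2 ≤ q ^ j := fun j hj =>
    le_trans hq2 (Nat.le_self_pow (by omega) q)
  -- the candidate
  set Ψ : PowerSeries ℤ := PowerSeries.mk (c p q) with hΨ
  have hΨ0 : constantCoeff Ψ = 0 := by
    rw [← coeff_zero_eq_constantCoeff, hΨ, coeff_mk, c]
  have hΨ1 : coeff 1 Ψ = 1 := by rw [hΨ, coeff_mk, c]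
  -- Ψ agrees with tau n below n
  have htau : ∀ n, ∀ k < n, coeff k Ψ = coeff k (tau p q n) := by
    intro n k hk
    rw [hΨ, tau, coeff_mk, coeff_mk, dif_pos hk]
  -- key: any series satisfying the normalization and agreeing with c below n
  -- has the j-th term (j ≥ 1) of the sum equal to the tau-version
  have key : ∀ (φ : PowerSeries ℤ), constantCoeff φ = 0 →
      ∀ n : ℕ, 1 ≤ n → (∀ k < n, coeff k φ = c p q k) →
      ∀ j, 1 ≤ j →
      ((p : ℚ) ^ j)⁻¹ *
          PowerSeries.coeff n
            ((PowerSeries.rescale ((p : ℚ) ^ j) (φ.map (Int.castRingHom ℚ))) ^ (q ^ j))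
        = (((p : ℤ) ^ (j * (n - 1)) *
            PowerSeries.coeff n ((tau p q n) ^ q ^ j) : ℤ) : ℚ) := by
    intro φ hφ0 n hn hc j hj
    rw [term_eq p hp0 n j _ hn φ]
    congr 2
    refine coeff_pow_congr ?_ hφ0 (tau_const p q n) (hqj j hj)
    intro k hk
    rw [tau, coeff_mk, dif_pos hk, hc k hk]
  -- the functional equation terms for j = 0
  have term0 : ∀ (φ : PowerSeries ℤ) (n : ℕ),
      ((p : ℚ) ^ 0)⁻¹ *
          PowerSeries.coeff n
            ((PowerSeries.rescale ((p : ℚ) ^ 0) (φ.map (Int.castRingHom ℚ))) ^ (q ^ 0)) =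
        ((coeff n φ : ℤ) : ℚ) := by
    intro φ n
    simp [rescale_one, coeff_map]
  refine ⟨Ψ, ⟨hΨ0, hΨ1, ?_⟩, ?_⟩
  · -- existence: verify the functional equation
    intro n
    match n with
    | 0 =>
        rw [Finset.sum_range_one, term0]
        have h0 : coeff 0 Ψ = 0 := by rw [coeff_zero_eq_constantCoeff]; exact hΨ0
        simp [h0]
    | 1 =>
        rw [Finset.sum_range_succ, Finset.sum_range_one, term0]
        have h0 : coeff 0 Ψ = 0 := by rw [coeff_zero_eq_constantCoeff]; exact hΨ0
        have hzero : coeff 1 ((PowerSeries.rescale ((p : ℚ) ^ 1)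
            (Ψ.map (Int.castRingHom ℚ))) ^ (q ^ 1)) = 0 := by
          apply coeff_pow_eq_zero
          · rw [← coeff_zero_eq_constantCoeff, coeff_rescale, coeff_map]
            simp [h0]
          · have := hqj 1 le_rfl
            omega
        rw [hzero, hΨ1]
        simp
    | (n + 2) =>
        have hsplit := Finset.sum_range_succ' (fun j =>
          ((p : ℚ) ^ j)⁻¹ *
            PowerSeries.coeff (n + 2)
              ((PowerSeries.rescale ((p : ℚ) ^ j) (Ψ.map (Int.castRingHom ℚ))) ^ (q ^ j)))
          (n + 2)
        rw [hsplit, term0]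
        have hterm : ∀ j ∈ Finset.range (n + 2),
            ((p : ℚ) ^ (j + 1))⁻¹ *
              PowerSeries.coeff (n + 2)
                ((PowerSeries.rescale ((p : ℚ) ^ (j + 1))
                  (Ψ.map (Int.castRingHom ℚ))) ^ (q ^ (j + 1))) =
            (((p : ℤ) ^ ((j + 1) * (n + 1)) *
              PowerSeries.coeff (n + 2) ((tau p q (n + 2)) ^ q ^ (j + 1)) : ℤ) : ℚ) := by
          intro j _
          have := key Ψ hΨ0 (n + 2) (by omega)
            (fun k hk => by rw [hΨ, coeff_mk]) (j + 1) (by omega)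
          simpa using this
        rw [Finset.sum_congr rfl hterm, ← Int.cast_sum]
        have hcn : coeff (n + 2) Ψ = c p q (n + 2) := by rw [hΨ, coeff_mk]
        rw [hcn, c_spec]
        push_cast
        simp [PowerSeries.coeff_X]
  · -- uniqueness
    intro Φ hΦ
    obtain ⟨hΦ0, hΦ1, hΦeq⟩ := hΦ
    ext n
    induction n using Nat.strong_induction_on with
    | _ n ih =>
      have goal : coeff n Φ = c p q n := by
        match n with
        | 0 => rw [c, coeff_zero_eq_constantCoeff, hΦ0]
        | 1 => rw [c, hΦ1]
        | (n + 2) =>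
            have hsplit := Finset.sum_range_succ' (fun j =>
              ((p : ℚ) ^ j)⁻¹ *
                PowerSeries.coeff (n + 2)
                  ((PowerSeries.rescale ((p : ℚ) ^ j) (Φ.map (Int.castRingHom ℚ))) ^ (q ^ j)))
              (n + 2)
            have heq := hΦeq (n + 2)
            rw [hsplit, term0] at heq
            have hterm : ∀ j ∈ Finset.range (n + 2),
                ((p : ℚ) ^ (j + 1))⁻¹ *
                  PowerSeries.coeff (n + 2)
                    ((PowerSeries.rescale ((p : ℚ) ^ (j + 1))
                      (Φ.map (Int.castRingHom ℚ))) ^ (q ^ (j + 1))) =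
                (((p : ℤ) ^ ((j + 1) * (n + 1)) *
                  PowerSeries.coeff (n + 2) ((tau p q (n + 2)) ^ q ^ (j + 1)) : ℤ) : ℚ) := by
              intro j _
              have := key Φ hΦ0 (n + 2) (by omega)
                (fun k hk => by rw [ih k hk, hΨ, coeff_mk]) (j + 1) (by omega)
              simpa using this
            rw [Finset.sum_congr rfl hterm, ← Int.cast_sum] at heq
            have hX : coeff (n + 2) (PowerSeries.X : PowerSeries ℚ) = 0 := by
              simp [coeff_X]
            rw [hX] at heq
            have : ((coeff (n + 2) Φ : ℤ) : ℚ) =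
                ((-∑ j ∈ Finset.range (n + 2), (p : ℤ) ^ ((j + 1) * (n + 1)) *
                  PowerSeries.coeff (n + 2) ((tau p q (n + 2)) ^ q ^ (j + 1)) : ℤ) : ℚ) := by
              push_cast at heq ⊢
              linarith
            rw [c_spec]
            exact_mod_cast this
      rw [goal, hΨ, coeff_mk]
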